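/- Let 𝒲 : [0,1] → [0,1] be piecewise differentiable, i.e., there is a partition of [0,1] into countably many intervals on whose interiors 𝒲 is differentiable with nonvanishing derivative. Then 𝒲 is uniformity-preserving if and only if for almost every v ∈ [0,1] one has Σ_{u ∈ 𝒲^{−1}({v})} 1/|𝒲′(u)| = 1. -/

import Mathlib

open MeasureTheory Set
open scoped ENNReal NNReal

lemma aux_ofReal_tsum_eq_one_iff {ι : Type*} (a : ι → ℝ) (ha : ∀ i, 0 ≤ a i) :
    (∑' i, ENNReal.ofReal (a i)) = 1 ↔ (∑' i, a i) = 1 := by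
  constructor
  · intro h
    have hfin : (∑' i, ENNReal.ofReal (a i)) ≠ ⊤ := by rw [h]; exact ENNReal.one_ne_top
    have hsum : Summable a := by
      have h1 : Summable (fun i => (ENNReal.ofReal (a i)).toReal) := ENNReal.summable_toReal hfin
      exact h1.congr (fun i => ENNReal.toReal_ofReal (ha i))
    rw [← ENNReal.ofReal_tsum_of_nonneg ha hsum, ← ENNReal.ofReal_one] at h
    exact (ENNReal.ofReal_eq_ofReal_iff (tsum_nonneg ha) zero_le_one).mp h
  · intro h
    have hsum : Summable a := by
      by_contra hc
      rw [tsum_eq_zero_of_not_summable hc] at h; exact one_ne_zero h.symm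
    rw [← ENNReal.ofReal_tsum_of_nonneg ha hsum, h, ENNReal.ofReal_one]

lemma aux_tsum_iUnion_disjoint {B : ℕ → Set ℝ} (hd : Pairwise (Function.onFun Disjoint B)) (F : ℝ → ℝ≥0∞) :
    ∑' u : ↥(⋃ n, B n), F u = ∑' n, ∑' u : ↥(B n), F u := by
  have h := Equiv.tsum_eq (Set.unionEqSigmaOfDisjoint hd).symm
    (fun u : ↥(⋃ n, B n) => F ↑u)
  rw [← h]
  rw [ENNReal.tsum_sigma' (fun c : (Σ n, ↥(B n)) => F ↑((Set.unionEqSigmaOfDisjoint hd).symm c))]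
  rfl


/-- The uniform distribution `U(0,1)`. -/
noncomputable def unif01 : Measure ℝ := volume.restrict (Set.Ioc (0 : ℝ) 1)

/-- a piecewise differentiable map `𝒲 : [0,1] → [0,1]` (differentiable
off a countable set, with nonvanishing derivative there) is uniformity-preserving if
and only if for almost every `v ∈ [0,1]` one has `Σ_{u ∈ 𝒲⁻¹({v})} 1/|𝒲'(u)| = 1`. -/
theorem uniformity_preserving_iff_preimage_derivative_sum
    (W : ℝ → ℝ) (hWmeas : Measurable W)
    (hWmaps : Set.MapsTo W (Set.Icc 0 1) (Set.Icc 0 1))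
    -- `𝒲` is piecewise differentiable with nonvanishing derivative `𝒲'`
    (W' : ℝ → ℝ) (S : Set ℝ) (hS : S.Countable)
    (hdiff : ∀ u ∈ Set.Icc (0 : ℝ) 1 \ S, HasDerivAt W (W' u) u ∧ W' u ≠ 0) :
    Measure.map W unif01 = unif01 ↔
      ∀ᵐ v ∂(volume.restrict (Set.Icc (0 : ℝ) 1)),
        ∑' u : ↥(Set.Icc (0 : ℝ) 1 ∩ W ⁻¹' {v}), (1 : ℝ) / |W' u| = 1 := by
  classical
  classical
  set s : Set ℝ := Icc (0:ℝ) 1 \ S with hs_def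
  have hSm : MeasurableSet S := hS.measurableSet
  have hs : MeasurableSet s := measurableSet_Icc.diff hSm
  have hS0 : volume S = 0 := hS.measure_zero _
  have hne : ∀ x ∈ s, W' x ≠ 0 := fun x hx => (hdiff x hx).2
  set f' : ℝ → ℝ →L[ℝ] ℝ := fun x => (1 : ℝ →L[ℝ] ℝ).smulRight (W' x) with hf'_def
  have hfder : ∀ x ∈ s, HasFDerivWithinAt W (f' x) s x := fun x hx =>
    ((hdiff x hx).1.hasDerivWithinAt).hasFDerivWithinAt
  -- choice of precision
  set r : (ℝ →L[ℝ] ℝ) → ℝ≥0 := fun B => if B 1 = 0 then 1 else ‖(B 1)⁻¹‖₊⁻¹ / 2 with hr_def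
  have hrpos : ∀ B, r B ≠ 0 := by
    intro B
    by_cases h : B 1 = 0
    · simp [hr_def, h]
    · have h1 : ‖(B 1)⁻¹‖₊ ≠ 0 := by
        simpa using inv_ne_zero h
      simp only [hr_def, h, if_false]
      exact div_ne_zero (inv_ne_zero h1) two_ne_zero
  obtain ⟨t, A, t_disj, t_meas, t_cover, t_approx, hA⟩ :=
    exists_partition_approximatesLinearOn_of_hasFDerivWithinAt W s f' hfder r hrpos
  have hvols : volume s = 1 := by
    rw [hs_def, measure_diff_null hS0]
    simp [Real.volume_Icc]
  have hsne : s.Nonempty := nonempty_of_measure_ne_zero (by rw [hvols]; exact one_ne_zero)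
  set σ : ℕ → Set ℝ := fun n => s ∩ t n with hσ_def
  have hσm : ∀ n, MeasurableSet (σ n) := fun n => hs.inter (t_meas n)
  have hσdisj : Pairwise (Function.onFun Disjoint σ) := fun i j hij =>
    ((t_disj hij).mono inter_subset_right inter_subset_right)
  have hσU : ⋃ n, σ n = s := by
    rw [hσ_def, ← inter_iUnion]
    exact inter_eq_left.mpr t_cover
  have hσs : ∀ n, σ n ⊆ s := fun n => inter_subset_left
  have hσIcc : ∀ n, σ n ⊆ Icc (0:ℝ) 1 := fun n => (hσs n).trans diff_subset
  have hσder : ∀ n, ∀ x ∈ σ n, HasFDerivWithinAt W (f' x) (σ n) x := fun n x hx =>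
    (hfder x hx.1).mono inter_subset_left
  -- injectivity on each piece
  have hinj : ∀ n, InjOn W (σ n) := by
    intro n
    obtain ⟨y, hy, hAy⟩ := hA hsne n
    have hc : W' y ≠ 0 := hne y hy
    have hApp : (A n) 1 = W' y := by rw [hAy]; simp [hf'_def]
    set e : ℝ ≃L[ℝ] ℝ := ContinuousLinearEquiv.equivOfInverse (f' y)
      ((1 : ℝ →L[ℝ] ℝ).smulRight (W' y)⁻¹)
      (by intro x; simp [hf'_def]; field_simp)
      (by intro x; simp [hf'_def]; field_simp) with he_def
    have hcoe : (e : ℝ →L[ℝ] ℝ) = A n := by rw [hAy]; rfl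
    have hsymm : ‖((e.symm : ℝ ≃L[ℝ] ℝ) : ℝ →L[ℝ] ℝ)‖₊ = ‖(W' y)⁻¹‖₊ := by
      have h1 : ((e.symm : ℝ ≃L[ℝ] ℝ) : ℝ →L[ℝ] ℝ) = (1 : ℝ →L[ℝ] ℝ).smulRight (W' y)⁻¹ := rfl
      rw [h1, ContinuousLinearMap.nnnorm_smulRight_apply]
      simp
    have happ : ApproximatesLinearOn W (e : ℝ →L[ℝ] ℝ) (σ n) (r (A n)) := by
      rw [hcoe]; exact t_approx n
    refine happ.injOn (Or.inr ?_)
    rw [hsymm]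
    have hrn : r (A n) = ‖(W' y)⁻¹‖₊⁻¹ / 2 := by
      rw [hr_def]
      simp only [hApp]
      rw [if_neg hc]
    rw [hrn]
    refine NNReal.half_lt_self ?_
    refine inv_ne_zero ?_
    simpa using inv_ne_zero hc
  -- change of variables on subsets of pieces
  have cov : ∀ n (u : Set ℝ), MeasurableSet u → u ⊆ σ n → ∀ g : ℝ → ℝ≥0∞,
      ∫⁻ v in W '' u, g v = ∫⁻ x in u, ENNReal.ofReal |W' x| * g (W x) := by
    intro n u hu hsub g
    have h := lintegral_image_eq_lintegral_abs_det_fderiv_mul volume hu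
      (fun x hx => (hσder n x (hsub hx)).mono hsub) ((hinj n).mono hsub) g
    simpa [hf'_def, ContinuousLinearMap.det_smulRight, LinearMap.det_ring] using h
  -- images of null subsets of pieces are null
  have img_null : ∀ n (u : Set ℝ), u ⊆ σ n → volume u = 0 → volume (W '' u) = 0 := by
    intro n u hsub hu0
    set u' := toMeasurable volume u ∩ σ n with hu'
    have hu'm : MeasurableSet u' := (measurableSet_toMeasurable _ _).inter (hσm n)
    have hu'0 : volume u' = 0 :=
      measure_mono_null inter_subset_left (by rwa [measure_toMeasurable])
    have hsub' : u ⊆ u' := subset_inter (subset_toMeasurable _ _) hsub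
    have hle := addHaar_image_le_lintegral_abs_det_fderiv volume hu'm
      (fun x hx => (hσder n x hx.2).mono inter_subset_right)
    refine measure_mono_null (image_mono hsub') (le_antisymm (hle.trans ?_) bot_le)
    rw [Measure.restrict_eq_zero.mpr hu'0, lintegral_zero_measure]
  -- a measurable version of the derivative
  have hKae : AEMeasurable f' (volume.restrict s) := aemeasurable_fderivWithin volume hs hfder
  set K : ℝ → ℝ := fun x => hKae.mk f' x 1 with hK_def
  have hKm : Measurable K :=
    ((ContinuousLinearMap.apply ℝ ℝ (1:ℝ)).continuous.measurable).comp hKae.measurable_mk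
  set bad : Set ℝ := {x | x ∈ s ∧ K x ≠ W' x} with hbad_def
  have hbad0 : volume bad = 0 := by
    have h2 : ∀ᵐ x ∂volume, x ∈ s → f' x = hKae.mk f' x := (ae_restrict_iff' hs).mp hKae.ae_eq_mk
    refine measure_mono_null ?_ (ae_iff.mp h2)
    intro x hx
    simp only [mem_setOf_eq, Classical.not_imp]
    refine ⟨hx.1, fun hcon => hx.2 ?_⟩
    rw [hK_def]
    simp only [← hcon, hf'_def]
    exact (congrArg (fun L : ℝ →L[ℝ] ℝ => L 1) hcon).symm.trans (by simp [hf'_def])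
  -- pushforward measures from the pieces
  set ν : ℕ → Measure ℝ := fun n => Measure.map W (volume.restrict (σ n)) with hν_def
  set Winv : ℕ → ℝ → ℝ := fun n => Function.invFunOn W (σ n) with hWinv_def
  have hlinv : ∀ n, ∀ x ∈ σ n, Winv n (W x) = x := fun n x hx =>
    (hinj n).leftInvOn_invFunOn hx
  have hinvmem : ∀ n v, v ∈ W '' σ n → Winv n v ∈ σ n ∧ W (Winv n v) = v := by
    intro n v hv
    obtain ⟨x, hx, rfl⟩ := hv
    rw [hlinv n x hx]; exact ⟨hx, rfl⟩
  have hν_apply : ∀ n (A : Set ℝ), MeasurableSet A → ν n A = volume (σ n ∩ W ⁻¹' A) := by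
    intro n A hA
    rw [hν_def]
    rw [Measure.map_apply hWmeas hA, Measure.restrict_apply (hWmeas hA), inter_comm]
  have hν_eq : ∀ n (A : Set ℝ), MeasurableSet A →
      ν n A = ∫⁻ v in A ∩ W '' σ n, ENNReal.ofReal (1 / |W' (Winv n v)|) := by
    intro n A hA
    set u := σ n ∩ W ⁻¹' A with hu_def
    have hum : MeasurableSet u := (hσm n).inter (hWmeas hA)
    have husub : u ⊆ σ n := inter_subset_left
    have himg : W '' u = A ∩ W '' σ n := by
      ext v
      constructor
      · rintro ⟨x, ⟨hxσ, hxA⟩, rfl⟩; exact ⟨hxA, ⟨x, hxσ, rfl⟩⟩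
      · rintro ⟨hvA, x, hxσ, rfl⟩; exact ⟨x, ⟨hxσ, hvA⟩, rfl⟩
    have hcov := cov n u hum husub (fun v => ENNReal.ofReal (1 / |W' (Winv n v)|))
    rw [himg] at hcov
    rw [hν_apply n A hA, hcov, ← hu_def]
    have h1 : volume u = ∫⁻ x in u, 1 := by simp
    rw [h1]
    refine setLIntegral_congr_fun hum ?_
    intro x hx
    beta_reduce
    have hxs : x ∈ s := hσs n (husub hx)
    have hpos : 0 < |W' x| := abs_pos.mpr (hne x hxs)
    rw [hlinv n x (husub hx)]
    rw [← ENNReal.ofReal_mul (abs_nonneg _)]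
    rw [mul_one_div_cancel (ne_of_gt hpos)]
    simp
  have habs : ∀ n, ν n ≪ volume := by
    intro n
    refine Measure.AbsolutelyContinuous.mk (fun A hA hA0 => ?_)
    rw [hν_eq n A hA]
    have h0 : volume (A ∩ W '' σ n) = 0 := measure_mono_null inter_subset_left hA0
    rw [Measure.restrict_eq_zero.mpr h0, lintegral_zero_measure]
  have hfin : ∀ n, IsFiniteMeasure (ν n) := by
    intro n
    constructor
    rw [hν_apply n univ MeasurableSet.univ]
    refine lt_of_le_of_lt (measure_mono ((inter_subset_left).trans (hσIcc n))) ?_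
    rw [Real.volume_Icc]
    norm_num
  set g : ℕ → ℝ → ℝ≥0∞ := fun n => (ν n).rnDeriv volume with hg_def
  have hgm : ∀ n, Measurable (g n) := fun n => Measure.measurable_rnDeriv _ _
  have hgd : ∀ n, volume.withDensity (g n) = ν n := by
    intro n
    haveI := hfin n
    exact Measure.withDensity_rnDeriv_eq _ _ (habs n)
  -- images of measurable subsets of pieces are measurable
  have him : ∀ n (M : Set ℝ), MeasurableSet M → MeasurableSet (W '' (σ n ∩ M)) := by
    intro n M hM
    exact measurable_image_of_fderivWithin ((hσm n).inter hM)
      (fun x hx => (hσder n x hx.1).mono inter_subset_left) ((hinj n).mono inter_subset_left)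
  have him0 : ∀ n, MeasurableSet (W '' σ n) := by
    intro n
    have h := him n univ MeasurableSet.univ
    rwa [inter_univ] at h
  set H : ℕ → ℝ → ℝ≥0∞ := fun n =>
    (W '' σ n).indicator (fun v => ENNReal.ofReal (1 / |K (Winv n v)|)) with hH_def
  have hHm : ∀ n, Measurable (H n) := by
    intro n
    intro B hB
    set F : ℝ → ℝ≥0∞ := fun x => ENNReal.ofReal (1 / |K x|) with hF_def
    have hFm : Measurable F := (measurable_const.div hKm.abs).ennreal_ofReal
    have key : W '' σ n ∩ (fun v => F (Winv n v)) ⁻¹' B = W '' (σ n ∩ F ⁻¹' B) := by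
      ext v
      constructor
      · rintro ⟨⟨x, hx, rfl⟩, hvB⟩
        refine ⟨x, ⟨hx, ?_⟩, rfl⟩
        simpa [hlinv n x hx] using hvB
      · rintro ⟨x, ⟨hx, hxB⟩, rfl⟩
        refine ⟨⟨x, hx, rfl⟩, ?_⟩
        simpa [hlinv n x hx] using hxB
    have hkeym : MeasurableSet (W '' (σ n ∩ F ⁻¹' B)) := him n _ (hFm hB)
    by_cases h0 : (0:ℝ≥0∞) ∈ B
    · have hEq : H n ⁻¹' B = W '' (σ n ∩ F ⁻¹' B) ∪ (W '' σ n)ᶜ := by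
        ext v
        by_cases hv : v ∈ W '' σ n
        · simp only [mem_preimage, hH_def, indicator_of_mem hv, mem_union, mem_compl_iff, hv,
            not_true_eq_false, or_false, ← key, mem_inter_iff]
          exact ⟨fun h => ⟨trivial, h⟩, fun h => h.2⟩
        · simp only [mem_preimage, hH_def, indicator_of_notMem hv, mem_union, mem_compl_iff, hv,
            not_false_eq_true, or_true, iff_true]
          exact h0
      rw [hEq]
      exact hkeym.union (him0 n).compl
    · have hEq : H n ⁻¹' B = W '' (σ n ∩ F ⁻¹' B) := by
        ext v
        by_cases hv : v ∈ W '' σ n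
        · simp only [mem_preimage, hH_def, indicator_of_mem hv, ← key, mem_inter_iff]
          exact ⟨fun h => ⟨hv, h⟩, fun h => h.2⟩
        · simp only [mem_preimage, hH_def, indicator_of_notMem hv, ← key, mem_inter_iff, hv,
            false_and, iff_false]
          exact h0
      rw [hEq]
      exact hkeym
  have hbadimg : ∀ n, volume (W '' (bad ∩ σ n)) = 0 := fun n =>
    img_null n _ inter_subset_right (measure_mono_null inter_subset_left hbad0)
  have hHint : ∀ n (A : Set ℝ), MeasurableSet A → ∫⁻ v in A, H n v = ν n A := by
    intro n A hA
    simp only [hH_def]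
    rw [lintegral_indicator (him0 n), Measure.restrict_restrict (him0 n), inter_comm,
      hν_eq n A hA]
    refine setLIntegral_congr_fun_ae (hA.inter (him0 n)) ?_
    have hnot : ∀ᵐ v ∂volume, v ∉ W '' (bad ∩ σ n) := measure_eq_zero_iff_ae_notMem.mp (hbadimg n)
    filter_upwards [hnot] with v hv hvmem
    obtain ⟨hinvσ, hWinvv⟩ := hinvmem n v hvmem.2
    have hKW : K (Winv n v) = W' (Winv n v) := by
      by_contra hKW
      exact hv ⟨Winv n v, ⟨⟨(hσs n) hinvσ, hKW⟩, hinvσ⟩, hWinvv⟩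
    rw [hKW]
  have hgH : ∀ n, g n =ᵐ[volume] H n := by
    intro n
    refine ae_eq_of_forall_setLIntegral_eq_of_sigmaFinite (hgm n) (hHm n) (fun A hA _ => ?_)
    rw [hHint n A hA, ← withDensity_apply _ hA, hgd n]
  set G : ℝ → ℝ≥0∞ := fun v => ∑' n, H n v with hG_def
  have hGm : Measurable G := Measurable.ennreal_tsum hHm
  have hmap : Measure.map W unif01 = volume.withDensity G := by
    refine Measure.ext (fun A hA => ?_)
    rw [withDensity_apply _ hA]
    have hres : unif01 = volume.restrict s := by
      rw [unif01]
      refine Measure.restrict_congr_set ?_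
      have h1 : (Ioc (0:ℝ) 1 : Set ℝ) =ᵐ[volume] Icc 0 1 := Ioc_ae_eq_Icc
      have h2 : (Icc (0:ℝ) 1 : Set ℝ) =ᵐ[volume] s :=
        (diff_ae_eq_self.mpr (measure_mono_null inter_subset_right hS0)).symm
      exact h1.trans h2
    rw [hres, Measure.map_apply hWmeas hA, Measure.restrict_apply (hWmeas hA)]
    have hU : W ⁻¹' A ∩ s = ⋃ n, (W ⁻¹' A ∩ σ n) := by rw [← hσU, inter_iUnion]
    rw [hU, measure_iUnion (fun i j hij => ((hσdisj hij).mono inter_subset_right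
      inter_subset_right)) (fun n => (hWmeas hA).inter (hσm n))]
    have hterm : ∀ n, volume (W ⁻¹' A ∩ σ n) = ν n A := by
      intro n
      rw [hν_apply n A hA, inter_comm]
    rw [tsum_congr hterm, tsum_congr (fun n => (hHint n A hA).symm)]
    exact (lintegral_tsum (fun n => (hHm n).aemeasurable)).symm
  -- identification of G with the preimage sum, almost everywhere
  have hGN : ∀ᵐ v ∂volume, G v =
      ∑' u : ↥(Icc (0:ℝ) 1 ∩ W ⁻¹' {v}), ENNReal.ofReal (1 / |W' u|) := by
    have hC1 : volume (W '' (Icc (0:ℝ) 1 ∩ S)) = 0 :=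
      ((hS.mono inter_subset_right).image W).measure_zero _
    have hC2 : volume (⋃ n, W '' (bad ∩ σ n)) = 0 := measure_iUnion_null hbadimg
    filter_upwards [measure_eq_zero_iff_ae_notMem.mp hC1, measure_eq_zero_iff_ae_notMem.mp hC2]
      with v hv1 hv2
    set T : Set ℝ := Icc (0:ℝ) 1 ∩ W ⁻¹' {v} with hT_def
    have hTs : T ⊆ s := by
      intro u hu
      exact ⟨hu.1, fun huS => hv1 ⟨u, ⟨hu.1, huS⟩, hu.2⟩⟩
    have hTσ : T = ⋃ n, (σ n ∩ W ⁻¹' {v}) := by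
      ext u
      constructor
      · intro hu
        obtain ⟨n, hn⟩ := mem_iUnion.mp (show u ∈ ⋃ n, σ n from hσU ▸ hTs hu)
        exact mem_iUnion.mpr ⟨n, hn, hu.2⟩
      · intro hu
        obtain ⟨n, hn⟩ := mem_iUnion.mp hu
        exact ⟨hσIcc n hn.1, hn.2⟩
    have hval : ∀ n, H n v = ∑' u : ↥(σ n ∩ W ⁻¹' {v}), ENNReal.ofReal (1 / |W' u|) := by
      intro n
      by_cases hvn : v ∈ W '' σ n
      · obtain ⟨hinvσ, hWinvv⟩ := hinvmem n v hvn
        have hset : σ n ∩ W ⁻¹' {v} = {Winv n v} := by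
          ext u
          simp only [mem_inter_iff, mem_preimage, mem_singleton_iff]
          constructor
          · rintro ⟨huσ, huv⟩
            exact (hinj n) huσ hinvσ (by rw [huv, hWinvv])
          · rintro rfl
            exact ⟨hinvσ, hWinvv⟩
        have hK : K (Winv n v) = W' (Winv n v) := by
          by_contra hKW
          exact hv2 (mem_iUnion.mpr ⟨n, ⟨Winv n v, ⟨⟨(hσs n) hinvσ, hKW⟩, hinvσ⟩, hWinvv⟩⟩)
        rw [hset]
        have hsing : ∑' u : ↥({Winv n v} : Set ℝ), ENNReal.ofReal (1 / |W' u|)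
            = ENNReal.ofReal (1 / |W' (Winv n v)|) := by
          exact tsum_eq_single (⟨Winv n v, rfl⟩ : ↥({Winv n v} : Set ℝ))
            (fun u hu => absurd (Subtype.ext (mem_singleton_iff.mp u.2)) hu)
        rw [hsing]
        simp only [hH_def, indicator_of_mem hvn, hK]
      · have hset : σ n ∩ W ⁻¹' {v} = ∅ := by
          ext u
          simp only [mem_inter_iff, mem_preimage, mem_singleton_iff, mem_empty_iff_false,
            iff_false, not_and]
          intro huσ huv
          exact hvn ⟨u, huσ, huv⟩
        rw [hset]
        simp [hH_def, indicator_of_notMem hvn, tsum_empty]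
    have hdisj2 : Pairwise (Function.onFun Disjoint fun n => σ n ∩ W ⁻¹' {v}) := fun i j hij =>
      (hσdisj hij).mono inter_subset_left inter_subset_left
    calc G v = ∑' n, H n v := rfl
      _ = ∑' n, ∑' u : ↥(σ n ∩ W ⁻¹' {v}), ENNReal.ofReal (1 / |W' u|) := tsum_congr hval
      _ = ∑' u : ↥(⋃ n, (σ n ∩ W ⁻¹' {v})), ENNReal.ofReal (1 / |W' u|) :=
        (aux_tsum_iUnion_disjoint hdisj2 (fun u => ENNReal.ofReal (1 / |W' u|))).symm
      _ = ∑' u : ↥T, ENNReal.ofReal (1 / |W' u|) := by rw [← hTσ]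
  -- final assembly
  have hIocm : MeasurableSet (Ioc (0:ℝ) 1) := measurableSet_Ioc
  have hIndm : Measurable ((Ioc (0:ℝ) 1).indicator (fun _ => (1:ℝ≥0∞))) :=
    measurable_const.indicator hIocm
  have hiff1 : Measure.map W unif01 = unif01 ↔
      G =ᵐ[volume] (Ioc (0:ℝ) 1).indicator (fun _ => (1:ℝ≥0∞)) := by
    rw [hmap]
    constructor
    · intro h
      refine ae_eq_of_forall_setLIntegral_eq_of_sigmaFinite hGm hIndm (fun A hA _ => ?_)
      have h1 : volume.withDensity G A = unif01 A := by rw [h]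
      rw [withDensity_apply _ hA] at h1
      rw [h1, unif01, Measure.restrict_apply hA]
      rw [lintegral_indicator hIocm, Measure.restrict_restrict hIocm, setLIntegral_one,
        inter_comm]
    · intro h
      have h2 : unif01 = volume.withDensity ((Ioc (0:ℝ) 1).indicator (fun _ => (1:ℝ≥0∞))) := by
        rw [unif01, ← withDensity_indicator_one hIocm]
        rfl
      rw [h2]
      exact withDensity_congr_ae h
  rw [hiff1, ae_restrict_iff' measurableSet_Icc]
  have h0ae : ∀ᵐ (v:ℝ) ∂volume, v ∉ ({0} : Set ℝ) :=
    measure_eq_zero_iff_ae_notMem.mp (measure_singleton 0)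
  constructor
  · intro h
    filter_upwards [h, hGN, h0ae] with v hGind hGsum hv0 hvIcc
    have hvIoc : v ∈ Ioc (0:ℝ) 1 :=
      ⟨lt_of_le_of_ne hvIcc.1 (Ne.symm (fun hc => hv0 (by simp [hc]))), hvIcc.2⟩
    have henn : (∑' u : ↥(Icc (0:ℝ) 1 ∩ W ⁻¹' {v}), ENNReal.ofReal (1 / |W' u|)) = 1 := by
      rw [← hGsum, hGind, indicator_of_mem hvIoc]
    exact (aux_ofReal_tsum_eq_one_iff _ (fun u => by positivity)).mp henn
  · intro h
    filter_upwards [h, hGN, h0ae] with v himp hGsum hv0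
    by_cases hvIcc : v ∈ Icc (0:ℝ) 1
    · have hvIoc : v ∈ Ioc (0:ℝ) 1 :=
        ⟨lt_of_le_of_ne hvIcc.1 (Ne.symm (fun hc => hv0 (by simp [hc]))), hvIcc.2⟩
      rw [hGsum, indicator_of_mem hvIoc]
      exact (aux_ofReal_tsum_eq_one_iff _ (fun u => by positivity)).mpr (himp hvIcc)
    · have hT : Icc (0:ℝ) 1 ∩ W ⁻¹' {v} = ∅ := by
        ext u
        simp only [mem_inter_iff, mem_preimage, mem_singleton_iff, mem_empty_iff_false,
          iff_false, not_and]
        intro hu huv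
        exact hvIcc (huv ▸ hWmaps hu)
      have hvIoc : v ∉ Ioc (0:ℝ) 1 := fun hc => hvIcc (Ioc_subset_Icc_self hc)
      rw [hGsum, indicator_of_notMem hvIoc, hT]
      exact tsum_empty
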